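/- Let V be a finite-dimensional complex vector space, k ≥ 2 an integer, and M₁, …, M_k invertible linear endomorphisms of V. For 1 ≤ l ≤ k set M̃_l := M_l ∘ M_{l−1} ∘ ⋯ ∘ M₁. Then Σ_{l=2}^{k} dim(ker(M_l − I) ∩ ker(M̃_{l−1} − I)) ≤ dim(⋂_{l=1}^{k} ker(M_l − I)) + Σ_{l=2}^{k−1} dim ker(M̃_l − I). (Equivalently, B(𝓜) ≤ A(𝓜), where A(𝓜) := dim(⋂_{l=1}^{k} ker(M_l − I)) and B(𝓜) := Σ_{l=2}^{k} dim(ker(M_l − I) ∩ ker(M̃_{l−1} − I)) − Σ_{l=2}^{k−1} dim ker(M̃_l − I).) -/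

import Mathlib

open Module

/-- `iterProd M l = M l * M (l-1) * ⋯ * M 1` (the `M̃_l` of the paper, with the
convention that the indexing of the maps is `1`-based and `iterProd M 0 = 1`). -/
def iterProd {V : Type*} [AddCommGroup V] [Module ℂ V]
    (M : ℕ → Module.End ℂ V) : ℕ → Module.End ℂ V
  | 0 => 1
  | l + 1 => M (l + 1) * iterProd M l

lemma inf_le_ker_iterProd {V : Type*} [AddCommGroup V] [Module ℂ V]
    (M : ℕ → Module.End ℂ V) (l : ℕ) :
    (⨅ j ∈ Finset.Icc 1 l, LinearMap.ker (M j - 1)) ≤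
      LinearMap.ker (iterProd M l - 1) := by
  induction l with
  | zero =>
    intro x _
    simp [iterProd]
  | succ n ih =>
    intro x hx
    simp only [Submodule.mem_iInf] at hx
    have hx' : x ∈ ⨅ j ∈ Finset.Icc 1 n, LinearMap.ker (M j - 1) := by
      simp only [Submodule.mem_iInf]
      intro j hj
      rw [Finset.mem_Icc] at hj
      exact hx j (Finset.mem_Icc.mpr ⟨hj.1, hj.2.trans (Nat.le_succ n)⟩)
    have h1 := ih hx'
    have h2 : x ∈ LinearMap.ker (M (n + 1) - 1) :=
      hx (n + 1) (Finset.mem_Icc.mpr ⟨Nat.succ_le_succ (Nat.zero_le n), le_rfl⟩)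
    simp only [LinearMap.mem_ker, LinearMap.sub_apply, Module.End.one_apply,
      sub_eq_zero] at h1 h2 ⊢
    show (iterProd M (n + 1)) x = x
    rw [iterProd, Module.End.mul_apply, h1, h2]

lemma key_ineq {V : Type*} [AddCommGroup V] [Module ℂ V] [FiniteDimensional ℂ V]
    (M : ℕ → Module.End ℂ V) (k : ℕ) :
    ∑ l ∈ Finset.Icc 2 (k + 1),
        finrank ℂ (LinearMap.ker (M l - 1) ⊓
          LinearMap.ker (iterProd M (l - 1) - 1) : Submodule ℂ V) +
      finrank ℂ (⨅ j ∈ Finset.Icc 1 1, LinearMap.ker (M j - 1) : Submodule ℂ V) ≤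
    finrank ℂ (⨅ j ∈ Finset.Icc 1 (k + 1), LinearMap.ker (M j - 1) : Submodule ℂ V) +
      ∑ l ∈ Finset.Icc 2 (k + 1),
        finrank ℂ (LinearMap.ker (iterProd M (l - 1) - 1) : Submodule ℂ V) := by
  induction k with
  | zero => simp
  | succ n ih =>
    have h21 : 2 ≤ n + 1 + 1 := by omega
    rw [Finset.sum_Icc_succ_top h21,
      Finset.sum_Icc_succ_top h21 (f := fun l =>
        finrank ℂ (LinearMap.ker (iterProd M (l - 1) - 1) : Submodule ℂ V))]
    have hb : n + 1 + 1 - 1 = n + 1 := rfl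
    rw [hb]
    set A := LinearMap.ker (M (n + 1 + 1) - 1) ⊓
      LinearMap.ker (iterProd M (n + 1) - 1) with hA
    set B := (⨅ j ∈ Finset.Icc 1 (n + 1), LinearMap.ker (M j - 1) : Submodule ℂ V) with hB
    have hAB : finrank ℂ A + finrank ℂ B =
        finrank ℂ (A ⊔ B : Submodule ℂ V) + finrank ℂ (A ⊓ B : Submodule ℂ V) :=
      (Submodule.finrank_sup_add_finrank_inf_eq A B).symm
    have hsup : (A ⊔ B : Submodule ℂ V) ≤
        LinearMap.ker (iterProd M (n + 1) - 1) := by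
      apply sup_le inf_le_right
      exact inf_le_ker_iterProd M (n + 1)
    have hinf : (A ⊓ B : Submodule ℂ V) ≤
        (⨅ j ∈ Finset.Icc 1 (n + 1 + 1), LinearMap.ker (M j - 1) : Submodule ℂ V) := by
      refine le_iInf₂ fun j hj => ?_
      rw [Finset.mem_Icc] at hj
      rcases eq_or_ne j (n + 1 + 1) with h | h
      · subst h
        exact inf_le_left.trans inf_le_left
      · refine inf_le_right.trans ?_
        exact iInf₂_le j (Finset.mem_Icc.mpr ⟨hj.1, by omega⟩)
    have hstep : finrank ℂ A + finrank ℂ B ≤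
        finrank ℂ (LinearMap.ker (iterProd M (n + 1) - 1) : Submodule ℂ V) +
        finrank ℂ (⨅ j ∈ Finset.Icc 1 (n + 1 + 1),
          LinearMap.ker (M j - 1) : Submodule ℂ V) := by
      rw [hAB]
      exact Nat.add_le_add (Submodule.finrank_mono hsup) (Submodule.finrank_mono hinf)
    omega

theorem stmt16 {V : Type*} [AddCommGroup V] [Module ℂ V] [FiniteDimensional ℂ V]
    (k : ℕ) (hk : 2 ≤ k) (M : ℕ → Module.End ℂ V)
    (hM : ∀ l ∈ Finset.Icc 1 k, Function.Bijective (M l)) :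
    ∑ l ∈ Finset.Icc 2 k,
        finrank ℂ (LinearMap.ker (M l - 1) ⊓
          LinearMap.ker (iterProd M (l - 1) - 1) : Submodule ℂ V) ≤
      finrank ℂ (⨅ l ∈ Finset.Icc 1 k, LinearMap.ker (M l - 1) : Submodule ℂ V) +
        ∑ l ∈ Finset.Icc 2 (k - 1),
          finrank ℂ (LinearMap.ker (iterProd M l - 1) : Submodule ℂ V) := by
  obtain ⟨n, rfl⟩ : ∃ n, k = n + 1 := ⟨k - 1, by omega⟩
  have hkey := key_ineq M n
  have hshift : ∑ l ∈ Finset.Icc 2 (n + 1),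
      finrank ℂ (LinearMap.ker (iterProd M (l - 1) - 1) : Submodule ℂ V) =
      ∑ l ∈ Finset.Icc 1 n,
      finrank ℂ (LinearMap.ker (iterProd M l - 1) : Submodule ℂ V) := by
    rw [← Finset.map_add_right_Icc 1 n 1, Finset.sum_map]
    simp [addRightEmbedding]
    rfl
  have hsplit : ∑ l ∈ Finset.Icc 1 n,
      finrank ℂ (LinearMap.ker (iterProd M l - 1) : Submodule ℂ V) =
      finrank ℂ (LinearMap.ker (iterProd M 1 - 1) : Submodule ℂ V) +
      ∑ l ∈ Finset.Icc 2 n,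
      finrank ℂ (LinearMap.ker (iterProd M l - 1) : Submodule ℂ V) := by
    have h1 : Finset.Icc 1 n = insert 1 (Finset.Icc 2 n) := by
      ext j; simp [Finset.mem_Icc]; omega
    rw [h1, Finset.sum_insert (by simp)]
  have hT1 : (LinearMap.ker (iterProd M 1 - 1) : Submodule ℂ V) =
      (⨅ j ∈ Finset.Icc 1 1, LinearMap.ker (M j - 1) : Submodule ℂ V) := by
    have h2 : iterProd M 1 = M 1 := by rw [iterProd, iterProd, mul_one]
    simp [h2]
  rw [hshift, hsplit, hT1] at hkey
  have hn : n + 1 - 1 = n := rfl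
  rw [hn]
  omega
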